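/- Let (a_n)_{n≥1} be a sequence of nonnegative real numbers and let P, Q, q be positive real numbers with P > q. Suppose that for every n ≥ 1, a_{n+1} ≤ (1 − P/(n+1)) a_n + Q/n^{1+q}. Then a_n = O(n^{−q}); that is, there exists a constant C > 0 such that a_n ≤ C n^{−q} for all n ≥ 1. -/

import Mathlib

/-- Bernoulli-type inequality: for `s ≥ 0` and any `q`, `1 - q*s ≤ (1+s)^(-q)` when `q ≥ 0`. -/
lemma chung_aux_bernoulli {s q : ℝ} (hs : 0 ≤ s) (hq : 0 ≤ q) :
    1 - q * s ≤ (1 + s) ^ (-q) := by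
  have h1s : (0:ℝ) < 1 + s := by linarith
  rw [Real.rpow_def_of_pos h1s, mul_comm (Real.log (1 + s)) (-q)]
  have hlog : Real.log (1 + s) ≤ s := by
    have := Real.log_le_sub_one_of_pos h1s
    linarith
  have h2 : -q * s ≤ -q * Real.log (1 + s) := by nlinarith
  have h3 := Real.add_one_le_exp (-q * Real.log (1 + s))
  linarith

/-- Chung's lemma (Lemma 1): if a nonnegative sequence satisfies
`a (n+1) ≤ (1 - P/(n+1)) a n + Q / n^(1+q)` for all `n ≥ 1`, with `P, Q, q > 0` and `P > q`,
then `a n = O(n^(-q))`: there is `C > 0` with `a n ≤ C n^(-q)` for all `n ≥ 1`. -/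
theorem chung_recursive_sequence (a : ℕ → ℝ) (P Q q : ℝ)
    (hP : 0 < P) (hQ : 0 < Q) (hq : 0 < q) (hPq : q < P)
    (hnonneg : ∀ n : ℕ, 1 ≤ n → 0 ≤ a n)
    (hrec : ∀ n : ℕ, 1 ≤ n →
      a (n + 1) ≤ (1 - P / (n + 1)) * a n + Q / (n : ℝ) ^ (1 + q)) :
    ∃ C > (0 : ℝ), ∀ n : ℕ, 1 ≤ n → a n ≤ C * (n : ℝ) ^ (-q) := by
  set ε := P - q with hεdef
  have hε0 : 0 < ε := by simp [hεdef]; linarith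
  -- choose a threshold N
  obtain ⟨N0, hN0⟩ := exists_nat_ge (max P (2 * q / ε))
  set N := N0 + 1 with hNdef
  have hN1 : 1 ≤ N := Nat.le_add_left 1 N0
  have hNR : (0:ℝ) < N := by positivity
  have hNP : P ≤ (N : ℝ) := by
    have := le_max_left P (2 * q / ε)
    have h2 : (N0 : ℝ) ≤ (N : ℝ) := by exact_mod_cast Nat.le_succ N0
    linarith [hN0.trans' this]
  have hNq : 2 * q / ε ≤ (N : ℝ) := by
    have := le_max_right P (2 * q / ε)
    have h2 : (N0 : ℝ) ≤ (N : ℝ) := by exact_mod_cast Nat.le_succ N0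
    linarith [hN0.trans' this]
  have hne : (Finset.Icc 1 N).Nonempty := ⟨1, by simp [hN1]⟩
  set C0 := (Finset.Icc 1 N).sup' hne (fun k => a k * (k : ℝ) ^ (q : ℝ)) with hC0def
  set C := max C0 (4 * Q / ε) with hCdef
  have hCQ : 4 * Q / ε ≤ C := le_max_right _ _
  have hCpos : 0 < C := lt_of_lt_of_le (by positivity) hCQ
  -- base case: n ≤ N
  have base : ∀ n : ℕ, 1 ≤ n → n ≤ N → a n ≤ C * (n : ℝ) ^ (-q) := by
    intro n h1 hn
    have hnR : (0:ℝ) < n := by exact_mod_cast h1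
    have hmem : n ∈ Finset.Icc 1 N := Finset.mem_Icc.mpr ⟨h1, hn⟩
    have hle : a n * (n : ℝ) ^ (q : ℝ) ≤ C0 :=
      Finset.le_sup' (fun k => a k * (k : ℝ) ^ (q : ℝ)) hmem
    have hid : (n : ℝ) ^ (q : ℝ) * (n : ℝ) ^ (-q) = 1 := by
      rw [← Real.rpow_add hnR]; simp
    have hpow : (0:ℝ) ≤ (n : ℝ) ^ (-q) := Real.rpow_nonneg hnR.le _
    calc a n = a n * (n : ℝ) ^ (q : ℝ) * (n : ℝ) ^ (-q) := by
          rw [mul_assoc, hid, mul_one]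
      _ ≤ C0 * (n : ℝ) ^ (-q) := mul_le_mul_of_nonneg_right hle hpow
      _ ≤ C * (n : ℝ) ^ (-q) := mul_le_mul_of_nonneg_right (le_max_left _ _) hpow
  -- inductive step for m ≥ N
  have step : ∀ m : ℕ, N ≤ m → a m ≤ C * (m : ℝ) ^ (-q) →
      a (m + 1) ≤ C * ((m : ℝ) + 1) ^ (-q) := by
    intro m hm ih
    have hm1 : 1 ≤ m := hN1.trans hm
    have hmR : (0:ℝ) < m := by exact_mod_cast hm1
    have hmN : (N : ℝ) ≤ m := by exact_mod_cast hm
    have hcoef : 0 ≤ 1 - P / ((m : ℝ) + 1) := by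
      rw [sub_nonneg, div_le_one (by linarith)]
      linarith
    have hpowq : (0:ℝ) < (m : ℝ) ^ (-q) := Real.rpow_pos_of_pos hmR _
    -- key: (m+1)^(-q) ≥ m^(-q) * (1 - q/m)
    have key : (m : ℝ) ^ (-q) * (1 - q / m) ≤ ((m : ℝ) + 1) ^ (-q) := by
      have hsplit : ((m : ℝ) + 1) = (m : ℝ) * (1 + 1 / m) := by field_simp
      rw [hsplit, Real.mul_rpow hmR.le (by positivity)]
      have hb : 1 - q * (1 / m) ≤ (1 + 1 / (m : ℝ)) ^ (-q) :=
        chung_aux_bernoulli (by positivity) hq.le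
      have : 1 - q / (m : ℝ) = 1 - q * (1 / m) := by ring
      rw [this]
      exact mul_le_mul_of_nonneg_left hb hpowq.le
    -- rewrite Q / m^(1+q) = (Q/m) * m^(-q)
    have hQrw : Q / (m : ℝ) ^ (1 + q) = (Q / m) * (m : ℝ) ^ (-q) := by
      rw [Real.rpow_add hmR, Real.rpow_one, Real.rpow_neg hmR.le]
      field_simp
    -- coefficient inequality: (1 - P/(m+1)) * C + Q/m ≤ C * (1 - q/m)
    have hcoefineq : (1 - P / ((m : ℝ) + 1)) * C + Q / m ≤ C * (1 - q / m) := by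
      have hgap : ε / (4 * m) ≤ P / ((m : ℝ) + 1) - q / m := by
        rw [div_sub_div _ _ (by linarith : ((m:ℝ)+1) ≠ 0) hmR.ne', le_div_iff₀ (by positivity)]
        have h1 : 2 * q ≤ ε * m := by
          rw [div_le_iff₀ hε0] at hNq
          nlinarith
        rw [div_mul_eq_mul_div, div_le_iff₀ (by positivity)]
        have h2 : (1:ℝ) ≤ m := by exact_mod_cast hm1
        nlinarith [mul_le_mul_of_nonneg_right h1 hmR.le,
          mul_nonneg (mul_nonneg hε0.le hmR.le) (sub_nonneg.mpr h2)]
      have h2 : Q / m ≤ C * (P / ((m : ℝ) + 1) - q / m) := by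
        calc Q / m = (4 * Q / ε) * (ε / (4 * m)) := by field_simp
          _ ≤ C * (P / ((m : ℝ) + 1) - q / m) := by
            apply mul_le_mul hCQ hgap (by positivity) hCpos.le
      nlinarith
    calc a (m + 1) ≤ (1 - P / ((m : ℝ) + 1)) * a m + Q / (m : ℝ) ^ (1 + q) :=
          hrec m hm1
      _ ≤ (1 - P / ((m : ℝ) + 1)) * (C * (m : ℝ) ^ (-q)) + (Q / m) * (m : ℝ) ^ (-q) := by
          rw [hQrw]
          exact add_le_add (mul_le_mul_of_nonneg_left ih hcoef) le_rfl
      _ = ((1 - P / ((m : ℝ) + 1)) * C + Q / m) * (m : ℝ) ^ (-q) := by ring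
      _ ≤ (C * (1 - q / m)) * (m : ℝ) ^ (-q) :=
          mul_le_mul_of_nonneg_right hcoefineq hpowq.le
      _ = C * ((m : ℝ) ^ (-q) * (1 - q / m)) := by ring
      _ ≤ C * ((m : ℝ) + 1) ^ (-q) := mul_le_mul_of_nonneg_left key hCpos.le
  refine ⟨C, hCpos, ?_⟩
  have main : ∀ n : ℕ, N ≤ n → a n ≤ C * (n : ℝ) ^ (-q) := by
    intro n hn
    induction n, hn using Nat.le_induction with
    | base => exact base N hN1 le_rfl
    | succ m hm ih =>
      have := step m hm ih
      push_cast
      convert this using 3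
  intro n h1
  rcases le_or_gt n N with h | h
  · exact base n h1 h
  · exact main n h.le
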